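/- arXiv:2004.09341 — 4 statements merged into one kernel-verified Lean document; each statement's English description precedes it below -/
import Mathlib

section
/- Suppose (a_k)_{k≥1} is a sequence of nonnegative real numbers and (c_k)_{k≥1} is a bounded sequence of nonnegative real numbers such that a_{k+1}² ≤ c_k · (a_k − a_{k+1}) for all k ≥ 1. Then for every k ≥ 1 one has a_{k+1} ≤ √(max_{1≤i≤k} c_i) · √(a_1) / √k. -/
/-- Iteration lemma (cf. Aguilera–Caffarelli, A2): if `(a k)` is nonnegative,
`(c k)` is nonnegative and bounded, and `a (k+1)² ≤ c k * (a k − a (k+1))` for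
all `k ≥ 1`, then `a (k+1) ≤ √(max_{1≤i≤k} c i) * √(a 1) / √k` for all `k ≥ 1`. -/
theorem iteration_lemma
    (a c : ℕ → ℝ) (M : ℝ)
    (ha : ∀ k, 1 ≤ k → 0 ≤ a k)
    (hc : ∀ k, 1 ≤ k → 0 ≤ c k)
    (hM : ∀ k, 1 ≤ k → c k ≤ M)
    (hrec : ∀ k, 1 ≤ k → a (k + 1) ^ 2 ≤ c k * (a k - a (k + 1))) :
    ∀ k, ∀ hk : 1 ≤ k,
      a (k + 1) ≤
        Real.sqrt ((Finset.Icc 1 k).sup' (Finset.nonempty_Icc.mpr hk) c) *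
          Real.sqrt (a 1) / Real.sqrt (k : ℝ) := by
  -- decreasing
  have hdec : ∀ k, 1 ≤ k → a (k + 1) ≤ a k := by
    intro k hk
    have h1 := hrec k hk
    have h2 := hc k hk
    have h3 := ha k hk
    have h4 := ha (k + 1) (by omega)
    nlinarith [sq_nonneg (a (k+1))]
  have hmono : ∀ i k, 1 ≤ i → i ≤ k → a (k + 1) ≤ a (i + 1) := by
    intro i k hi hik
    induction k with
    | zero => omega
    | succ n ih =>
      rcases Nat.lt_or_ge i (n + 1) with h | h
      · exact le_trans (hdec (n + 1) (by omega)) (ih (by omega))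
      · have : i = n + 1 := by omega
        subst this; rfl
  -- telescoping sum
  have htel : ∀ k, 1 ≤ k →
      ∑ i ∈ Finset.Icc 1 k, (a i - a (i + 1)) = a 1 - a (k + 1) := by
    intro k hk
    induction k with
    | zero => omega
    | succ n ih =>
      rcases Nat.eq_or_lt_of_le hk with h | h
      · simp [← h]
      · rw [Finset.sum_Icc_succ_top (by omega), ih (by omega)]
        ring
  intro k hk
  set C := (Finset.Icc 1 k).sup' (Finset.nonempty_Icc.mpr hk) c with hC
  have hCmem : ∀ i ∈ Finset.Icc 1 k, c i ≤ C := fun i hi =>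
    Finset.le_sup' c hi
  have hC0 : 0 ≤ C := le_trans (hc 1 le_rfl)
    (hCmem 1 (Finset.mem_Icc.mpr ⟨le_rfl, hk⟩))
  -- key inequality : k * a(k+1)^2 ≤ C * a 1
  have key : (k : ℝ) * a (k + 1) ^ 2 ≤ C * a 1 := by
    have h1 : (k : ℝ) * a (k + 1) ^ 2 ≤ ∑ i ∈ Finset.Icc 1 k, a (i + 1) ^ 2 := by
      have := Finset.sum_le_sum (f := fun _ : ℕ => a (k + 1) ^ 2)
        (g := fun i => a (i + 1) ^ 2) (s := Finset.Icc 1 k)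
        (fun i hi => by
          rcases Finset.mem_Icc.mp hi with ⟨hi1, hi2⟩
          have h := hmono i k hi1 hi2
          exact pow_le_pow_left₀ (ha (k + 1) (by omega)) h 2)
      simpa [Finset.sum_const, Nat.Icc_eq_range', mul_comm] using this
    have h2 : ∑ i ∈ Finset.Icc 1 k, a (i + 1) ^ 2 ≤
        ∑ i ∈ Finset.Icc 1 k, C * (a i - a (i + 1)) := by
      refine Finset.sum_le_sum fun i hi => ?_
      rcases Finset.mem_Icc.mp hi with ⟨hi1, hi2⟩
      refine le_trans (hrec i hi1) ?_
      have hd : 0 ≤ a i - a (i + 1) := by linarith [hdec i hi1]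
      exact mul_le_mul_of_nonneg_right (hCmem i hi) hd
    have h3 : ∑ i ∈ Finset.Icc 1 k, C * (a i - a (i + 1)) = C * (a 1 - a (k + 1)) := by
      rw [← Finset.mul_sum, htel k hk]
    have h4 : C * (a 1 - a (k + 1)) ≤ C * a 1 := by
      have := ha (k + 1) (by omega)
      nlinarith
    linarith
  have hk0 : (0 : ℝ) < (k : ℝ) := by exact_mod_cast hk
  have ha1 : 0 ≤ a 1 := ha 1 le_rfl
  have hsq : a (k + 1) ^ 2 ≤ C * a 1 / k := by
    rw [le_div_iff₀ hk0]; linarith [key]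
  have hak1 : 0 ≤ a (k + 1) := ha (k + 1) (by omega)
  have hstep : a (k + 1) ≤ Real.sqrt (C * a 1 / k) := by
    have h0 : 0 ≤ C * a 1 / k := div_nonneg (mul_nonneg hC0 ha1) hk0.le
    have := Real.sqrt_le_sqrt hsq
    calc a (k + 1) = Real.sqrt (a (k + 1) ^ 2) := by
            rw [Real.sqrt_sq hak1]
      _ ≤ Real.sqrt (C * a 1 / k) := this
  calc a (k + 1) ≤ Real.sqrt (C * a 1 / k) := hstep
    _ = Real.sqrt C * Real.sqrt (a 1) / Real.sqrt k := by
        rw [Real.sqrt_div (mul_nonneg hC0 ha1), Real.sqrt_mul hC0]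
end

section
/- Let N ∈ ℕ and let M be a real N×N matrix whose off-diagonal entries are nonpositive, i.e. M_{ij} ≤ 0 for all i ≠ j. Let u, v, b, c ∈ ℝᴺ satisfy (Mu)_i ≤ b_i and (Mv)_i ≤ c_i for every i, where (Mw)_i = ∑_j M_{ij} w_j. Then the componentwise maximum u ∨ v (defined by (u ∨ v)_i = max(u_i, v_i)) satisfies (M(u ∨ v))_i ≤ max(b_i, c_i) for every i. -/
lemma mulVec_max_le_aux (N : ℕ) (M : Matrix (Fin N) (Fin N) ℝ)
    (hM : ∀ i j, i ≠ j → M i j ≤ 0) (u v : Fin N → ℝ) (i : Fin N)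
    (h : v i ≤ u i) :
    M.mulVec (fun j => max (u j) (v j)) i ≤ M.mulVec u i := by
  unfold Matrix.mulVec dotProduct
  apply Finset.sum_le_sum
  intro j _
  by_cases hj : j = i
  · subst hj; simp [max_eq_left h]
  · exact mul_le_mul_of_nonpos_left (le_max_left _ _) (hM i j (Ne.symm hj))

/-- The linear-algebraic core of "the nodal maximum of two discrete
subsolutions is a discrete subsolution": if `M` has nonpositive off-diagonal
entries and `M u ≤ b`, `M v ≤ c` componentwise, then
`M (u ∨ v) ≤ b ∨ c` componentwise, where `∨` is the componentwise maximum. -/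
theorem mulVec_max_le_of_offdiag_nonpos
    (N : ℕ) (M : Matrix (Fin N) (Fin N) ℝ)
    (hM : ∀ i j, i ≠ j → M i j ≤ 0)
    (u v b c : Fin N → ℝ)
    (hu : ∀ i, M.mulVec u i ≤ b i)
    (hv : ∀ i, M.mulVec v i ≤ c i) :
    ∀ i, M.mulVec (fun j => max (u j) (v j)) i ≤ max (b i) (c i) := by
  intro i
  rcases le_total (v i) (u i) with h | h
  · exact le_trans (mulVec_max_le_aux N M hM u v i h)
      (le_trans (hu i) (le_max_left _ _))
  · have := mulVec_max_le_aux N M hM v u i h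
    simp only [max_comm (u _) (v _)] at *
    exact le_trans this (le_trans (hv i) (le_max_right _ _))
end

section
/- Let N ∈ ℕ and let M be a real N×N matrix with M_{ij} ≤ 0 for all i ≠ j and with zero row sums, i.e. ∑_j M_{ij} = 0 for every i. Let u, b ∈ ℝᴺ satisfy (Mu)_i ≤ b_i for every i. Then for every constant c ∈ ℝ, the vector w defined by w_i = max(u_i − c, 0) satisfies (Mw)_i ≤ max(b_i, 0) for every i. -/
/-- The linear-algebraic form of "the nodal positive part of a discrete
subsolution is a discrete subsolution": if `M` has nonpositive off-diagonal
entries and zero row sums, and `M u ≤ b` componentwise, then for any constant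
`c` the vector `w` with `w i = max (u i − c) 0` satisfies
`M w ≤ max b 0` componentwise. -/
theorem mulVec_posPart_le_of_offdiag_nonpos_rowSum_zero
    (N : ℕ) (M : Matrix (Fin N) (Fin N) ℝ)
    (hM : ∀ i j, i ≠ j → M i j ≤ 0)
    (hrow : ∀ i, ∑ j, M i j = 0)
    (u b : Fin N → ℝ)
    (hu : ∀ i, M.mulVec u i ≤ b i) :
    ∀ c : ℝ, ∀ i, M.mulVec (fun j => max (u j - c) 0) i ≤ max (b i) 0 := by
  intro c i
  have hv : M.mulVec (fun j => u j - c) i = M.mulVec u i := by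
    simp only [Matrix.mulVec, dotProduct, mul_sub, Finset.sum_sub_distrib,
      ← Finset.sum_mul, hrow i, zero_mul, sub_zero]
  by_cases h : u i - c ≤ 0
  · have : M.mulVec (fun j => max (u j - c) 0) i ≤ 0 := by
      rw [Matrix.mulVec, dotProduct]
      apply Finset.sum_nonpos
      intro j _
      by_cases hij : j = i
      · subst hij
        simp [max_eq_right h]
      · exact mul_nonpos_of_nonpos_of_nonneg (hM i j (Ne.symm hij)) (le_max_right _ _)
    exact this.trans (le_max_right _ _)
  · have h1 : M.mulVec (fun j => max (u j - c) 0) i ≤ M.mulVec (fun j => u j - c) i := by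
      rw [Matrix.mulVec, dotProduct, Matrix.mulVec, dotProduct]
      apply Finset.sum_le_sum
      intro j _
      by_cases hij : j = i
      · subst hij
        rw [max_eq_left (le_of_lt (not_le.mp h))]
      · exact mul_le_mul_of_nonpos_left (le_max_left _ _) (hM i j (Ne.symm hij))
    calc M.mulVec (fun j => max (u j - c) 0) i ≤ M.mulVec u i := by rw [← hv]; exact h1
      _ ≤ b i := hu i
      _ ≤ max (b i) 0 := le_max_left _ _
end

section
/- Let N ∈ ℕ and let M be a real N×N matrix with M_{ij} ≤ 0 for all i ≠ j and zero column sums, i.e. ∑_i M_{ij} = 0 for every j. Let v ∈ ℝᴺ with 0 ≤ v_i ≤ 1 for all i. Fix an index j with M_{jj} > 0 and suppose ∑_i v_i M_{ij} ≤ ρ for some ρ ∈ ℝ. If k ≠ j is an index with −M_{kj} ≥ τ M_{jj} for some τ ∈ (0,1], then v_j ≤ 1 − τ + τ v_k + ρ / M_{jj}. -/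
/-- The algebraic one-step comparison inequality underlying the discrete
De Giorgi argument: if `M` has nonpositive off-diagonal entries and zero
column sums, `0 ≤ v ≤ 1` componentwise, `M j j > 0`, `∑ i, v i * M i j ≤ ρ`,
and `k ≠ j` satisfies `−M k j ≥ τ * M j j` with `τ ∈ (0,1]`, then
`v j ≤ 1 − τ + τ * v k + ρ / M j j`. -/
theorem discrete_one_step_comparison
    (N : ℕ) (M : Matrix (Fin N) (Fin N) ℝ)
    (hM : ∀ i j, i ≠ j → M i j ≤ 0)
    (hcol : ∀ j, ∑ i, M i j = 0)
    (v : Fin N → ℝ) (hv0 : ∀ i, 0 ≤ v i) (hv1 : ∀ i, v i ≤ 1)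
    (j : Fin N) (hMjj : 0 < M j j)
    (ρ : ℝ) (hρ : ∑ i, v i * M i j ≤ ρ)
    (k : Fin N) (hkj : k ≠ j)
    (τ : ℝ) (hτ0 : 0 < τ) (hτ1 : τ ≤ 1)
    (hτM : τ * M j j ≤ -M k j) :
    v j ≤ 1 - τ + τ * v k + ρ / M j j := by
  have hsum : ∑ i, (v i - 1) * M i j = ∑ i, v i * M i j := by
    rw [← sub_eq_zero, ← Finset.sum_sub_distrib]
    have : ∀ i ∈ Finset.univ, (v i - 1) * M i j - v i * M i j = -M i j := by
      intro i _; ring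
    rw [Finset.sum_congr rfl this, Finset.sum_neg_distrib, hcol, neg_zero]
  have hkey : (v j - 1) * M j j + (v k - 1) * M k j ≤ ρ := by
    have hsub : ({j, k} : Finset (Fin N)) ⊆ Finset.univ := Finset.subset_univ _
    have hpair : ∑ i ∈ ({j, k} : Finset (Fin N)), (v i - 1) * M i j
        = (v j - 1) * M j j + (v k - 1) * M k j :=
      Finset.sum_pair (Ne.symm hkj)
    have hle : ∑ i ∈ ({j, k} : Finset (Fin N)), (v i - 1) * M i j
        ≤ ∑ i, (v i - 1) * M i j := by
      apply Finset.sum_le_sum_of_subset_of_nonneg hsub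
      intro i _ hi
      have hij : i ≠ j := by
        intro h; exact hi (by simp [h])
      have := hM i j hij; nlinarith [hv1 i]
    linarith [hsum ▸ hle]
  have h2 : (1 - v k) * (τ * M j j) ≤ (1 - v k) * (-M k j) :=
    mul_le_mul_of_nonneg_left hτM (by linarith [hv1 k])
  have hfin : (v j - 1 + τ * (1 - v k)) * M j j ≤ ρ := by nlinarith
  have := (div_le_div_iff_of_pos_right hMjj).mpr hfin
  rw [mul_div_assoc, div_self (ne_of_gt hMjj), mul_one] at this
  linarith
end
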